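/- Under the hypotheses of the previous result applied at every iteration k = 0,...,N−1 (with the same α ∈ (0,1)), one has Σ_{k=0}^{N−1} ‖x̂_k − x_k‖² ≤ ‖x_0 − x*‖²/(1−α). -/

import Mathlib

set_option maxHeartbeats 800000

open InnerProductSpace

local notation "⟪" x ", " y "⟫" => @inner ℝ _ _ x y

section Helpers

variable {E : Type*} [NormedAddCommGroup E] [InnerProductSpace ℝ E] [CompleteSpace E]

/-- First-order condition for a convex differentiable function. -/
lemma qnpe_convex_grad_le {h : E → ℝ} (hc : ConvexOn ℝ Set.univ h) {g x : E}
    (hg : HasGradientAt h g x) (y : E) : ⟪g, y - x⟫ ≤ h y - h x := by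
  rcases eq_or_ne y x with rfl | hne
  · simp
  · have hL : HasDerivAt (fun t : ℝ => x + t • (y - x)) (y - x) 0 := by
      simpa using ((hasDerivAt_id (0 : ℝ)).smul_const (y - x)).const_add x
    have hF : HasFDerivAt h (toDual ℝ E g) x := hasGradientAt_iff_hasFDerivAt.mp hg
    have hd : HasDerivAt (fun t : ℝ => h (x + t • (y - x))) ⟪g, y - x⟫ 0 := by
      have hF' : HasFDerivAt h (toDual ℝ E g) (x + (0 : ℝ) • (y - x)) := by simpa using hF
      have := hF'.comp_hasDerivAt (x := (0 : ℝ)) hL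
      simpa [toDual_apply_apply, Function.comp_def] using this
    have hφc : ConvexOn ℝ Set.univ fun t : ℝ => h (x + t • (y - x)) := by
      have h2 := hc.comp_affineMap (AffineMap.lineMap x y : ℝ →ᵃ[ℝ] E)
      have : (h ∘ (AffineMap.lineMap x y : ℝ →ᵃ[ℝ] E)) = fun t : ℝ => h (x + t • (y - x)) := by
        funext t
        simp [Function.comp, AffineMap.lineMap_apply_module', add_comm]
      rw [this] at h2
      simpa using h2
    have hs := hφc.le_slope_of_hasDerivAt (Set.mem_univ (0 : ℝ)) (Set.mem_univ (1 : ℝ))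
      one_pos hd
    have : slope (fun t : ℝ => h (x + t • (y - x))) 0 1 = h y - h x := by
      simp [slope_def_field]
    linarith [hs.trans_eq this]

lemma qnpe_hasGradientAt_half_norm_sq (μ : ℝ) (z : E) :
    HasGradientAt (fun x : E => μ / 2 * ‖x‖ ^ 2) (μ • z) z := by
  rw [hasGradientAt_iff_hasFDerivAt]
  have h1 := ((hasFDerivAt_id z).inner ℝ (hasFDerivAt_id z)).const_mul (μ / 2)
  simp only [real_inner_self_eq_norm_sq] at h1
  refine h1.congr_fderiv ?_
  ext w
  simp [fderivInnerCLM_apply, toDual_apply_apply, real_inner_smul_left, real_inner_comm]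
  ring

end Helpers

section Step

variable {d : ℕ}

/-- One-step decrease of the Lyapunov function. -/
lemma qnpe_step (μ α ηk : ℝ) (g xstar xk xhk xk1 : EuclideanSpace ℝ (Fin d))
    (hμ : 0 < μ) (hα0 : 0 ≤ α) (hα1 : α ≤ 1) (hη : 0 < ηk)
    (hkey : μ * ‖xhk - xstar‖ ^ 2 ≤ ⟪g, xhk - xstar⟫)
    (happ : ‖xhk - xk + ηk • g‖ ≤ α * ‖xhk - xk‖)
    (hupd : xk1 = (1 / (1 + 2 * ηk * μ)) • (xk - ηk • g)
        + ((2 * ηk * μ) / (1 + 2 * ηk * μ)) • xhk) :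
    (1 - α) * ‖xhk - xk‖ ^ 2 ≤ ‖xk - xstar‖ ^ 2 - ‖xk1 - xstar‖ ^ 2 := by
  have hs : 0 < 2 * ηk * μ := by positivity
  have hc : (1 + 2 * ηk * μ) ≠ 0 := by positivity
  -- vector identity
  have hv : xk - xk1 = (2 * ηk * μ) • (xk1 - xhk) + ηk • g := by
    have hm : (1 + 2 * ηk * μ) • xk1 = (xk - ηk • g) + (2 * ηk * μ) • xhk := by
      rw [hupd, smul_add, smul_smul, smul_smul]
      congr 1
      · congr 1
        field_simp
        rw [one_smul]
      · congr 1
        field_simp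
    have hm2 : xk1 + (2 * ηk * μ) • xk1 = (xk - ηk • g) + (2 * ηk * μ) • xhk := by
      rw [← hm, add_smul, one_smul]
    have h' : (2 * ηk * μ) • xk1 = (xk - ηk • g) + (2 * ηk * μ) • xhk - xk1 :=
      eq_sub_of_add_eq' hm2
    rw [smul_sub, h']
    abel
  -- abbreviations
  set w : EuclideanSpace ℝ (Fin d) := xhk - xk with hw
  set q : EuclideanSpace ℝ (Fin d) := xk1 - xhk with hq
  set e : EuclideanSpace ℝ (Fin d) := xhk - xk + ηk • g with he
  have hgeq : ηk • g = e - w := by rw [he, hw]; abel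
  -- norm decompositions
  have h1 : ‖xk - xstar‖ ^ 2
      = ‖xk1 - xstar‖ ^ 2 + 2 * ⟪xk1 - xstar, xk - xk1⟫ + ‖xk - xk1‖ ^ 2 := by
    have e1 : xk - xstar = (xk1 - xstar) + (xk - xk1) := by abel
    rw [e1, norm_add_sq_real]
  have h2 : ⟪xk1 - xstar, xk - xk1⟫
      = (2 * ηk * μ) * ⟪xk1 - xstar, q⟫ + ⟪xk1 - xstar, ηk • g⟫ := by
    rw [hv, inner_add_right, real_inner_smul_right]
  have h3 : ⟪xk1 - xstar, q⟫ = ⟪xhk - xstar, q⟫ + ‖q‖ ^ 2 := by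
    have e1 : xk1 - xstar = (xhk - xstar) + q := by rw [hq]; abel
    rw [e1, inner_add_left, real_inner_self_eq_norm_sq]
  have h4 : ⟪xk1 - xstar, ηk • g⟫ = ηk * ⟪g, xhk - xstar⟫ + ⟪e, q⟫ - ⟪w, q⟫ := by
    have e1 : xk1 - xstar = (xhk - xstar) + q := by rw [hq]; abel
    have t1 : ⟪xhk - xstar, ηk • g⟫ = ηk * ⟪g, xhk - xstar⟫ := by
      rw [real_inner_smul_right, real_inner_comm]
    have t2 : ⟪q, ηk • g⟫ = ⟪e, q⟫ - ⟪w, q⟫ := by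
      rw [hgeq, inner_sub_right, real_inner_comm q e, real_inner_comm q w]
    rw [e1, inner_add_left, t1, t2]
    ring
  have h5 : ‖xk - xk1‖ ^ 2 = ‖w‖ ^ 2 + 2 * ⟪w, q⟫ + ‖q‖ ^ 2 := by
    have e1 : xk - xk1 = -(w + q) := by rw [hw, hq]; abel
    rw [e1, norm_neg, norm_add_sq_real]
  -- s‖p‖² identity: 2⟪â,q⟫ + ‖â‖² + ‖q‖² = ‖p‖²
  have h6 : 2 * ⟪xhk - xstar, q⟫ + ‖xhk - xstar‖ ^ 2 + ‖q‖ ^ 2 = ‖xk1 - xstar‖ ^ 2 := by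
    have e1 : xk1 - xstar = (xhk - xstar) + q := by rw [hq]; abel
    rw [e1, norm_add_sq_real]; ring
  -- Cauchy–Schwarz bound on ⟪e,q⟫
  have h7 : -(α * ‖w‖ * ‖q‖) ≤ ⟪e, q⟫ := by
    have hcs := abs_real_inner_le_norm e q
    have h8 : ‖e‖ * ‖q‖ ≤ α * ‖w‖ * ‖q‖ :=
      mul_le_mul_of_nonneg_right happ (norm_nonneg q)
    have := abs_le.mp hcs
    linarith [this.1]
  have h9 : 2 * (α * ‖w‖ * ‖q‖) ≤ α * (‖w‖ ^ 2 + ‖q‖ ^ 2) := by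
    nlinarith [sq_nonneg (‖w‖ - ‖q‖)]
  have hp2 : 0 ≤ ‖xk1 - xstar‖ ^ 2 := sq_nonneg _
  have hq2 : 0 ≤ ‖q‖ ^ 2 := sq_nonneg _
  have h3' := congrArg (fun t => (2 * ηk * μ) * t) h3
  have h6' := congrArg (fun t => (2 * ηk * μ) * t) h6
  have hk' := mul_le_mul_of_nonneg_left hkey (le_of_lt hη)
  have hP' := mul_le_mul_of_nonneg_left hp2 (le_of_lt hs)
  have hQ' := mul_le_mul_of_nonneg_left hq2 (le_of_lt hs)
  nlinarith [h1, h2, h3', h4, h5, h6', h7, h9, hk', hP', hQ', sq_nonneg ‖w‖,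
    mul_nonneg (sub_nonneg.mpr hα1) hq2]

end Step

/-- Summability of the squared displacements of the QNPE iterates:
`Σ_{k<N} ‖x̂_k − x_k‖² ≤ ‖x_0 − x*‖² / (1 − α)`. -/
theorem qnpe_sum_of_squares {d : ℕ} (N : ℕ) (μ α : ℝ) (η : ℕ → ℝ)
    (f : EuclideanSpace ℝ (Fin d) → ℝ)
    (gf : EuclideanSpace ℝ (Fin d) → EuclideanSpace ℝ (Fin d))
    (xstar : EuclideanSpace ℝ (Fin d))
    (x xh : ℕ → EuclideanSpace ℝ (Fin d))
    (hμ : 0 < μ) (hα0 : 0 < α) (hα1 : α < 1)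
    (hgrad : ∀ z, HasGradientAt f (gf z) z)
    (hsc : StrongConvexOn Set.univ μ f)
    (hmin : ∀ y, f xstar ≤ f y)
    (hη : ∀ k < N, 0 < η k)
    (happrox : ∀ k < N, ‖xh k - x k + η k • gf (xh k)‖ ≤ α * ‖xh k - x k‖)
    (hupdate : ∀ k < N, x (k + 1) = (1 / (1 + 2 * η k * μ)) • (x k - η k • gf (xh k))
        + ((2 * η k * μ) / (1 + 2 * η k * μ)) • xh k) :
    ∑ k ∈ Finset.range N, ‖xh k - x k‖ ^ 2 ≤ ‖x 0 - xstar‖ ^ 2 / (1 - α) := by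
  -- gradient of the convexified function
  have hconv : ConvexOn ℝ Set.univ fun z => f z - μ / 2 * ‖z‖ ^ 2 :=
    strongConvexOn_iff_convex.mp hsc
  have hh : ∀ z, HasGradientAt (fun z => f z - μ / 2 * ‖z‖ ^ 2) (gf z - μ • z) z := by
    intro z
    rw [hasGradientAt_iff_hasFDerivAt, map_sub]
    exact (hasGradientAt_iff_hasFDerivAt.mp (hgrad z)).sub
      (hasGradientAt_iff_hasFDerivAt.mp (qnpe_hasGradientAt_half_norm_sq μ z))
  -- the gradient vanishes at the minimizer
  have hgzero : gf xstar = 0 := by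
    have hloc : IsLocalMin f xstar := Filter.Eventually.of_forall hmin
    have h0 : toDual ℝ (EuclideanSpace ℝ (Fin d)) (gf xstar) = 0 :=
      hloc.hasFDerivAt_eq_zero (hasGradientAt_iff_hasFDerivAt.mp (hgrad xstar))
    have : ⟪gf xstar, gf xstar⟫ = 0 := by
      have := DFunLike.congr_fun h0 (gf xstar)
      simpa [toDual_apply_apply] using this
    exact inner_self_eq_zero.mp this
  -- strong monotonicity at the minimizer
  have hkey : ∀ z, μ * ‖z - xstar‖ ^ 2 ≤ ⟪gf z, z - xstar⟫ := by
    intro z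
    have A := qnpe_convex_grad_le hconv (hh z) xstar
    have B := qnpe_convex_grad_le hconv (hh xstar) z
    rw [hgzero] at B
    simp only [inner_sub_left, real_inner_smul_left, zero_sub, inner_neg_left] at A B
    have e1 : ⟪z, xstar - z⟫ = -⟪z, z - xstar⟫ := by
      rw [← inner_neg_right]; congr 1; abel
    have e2 : ⟪gf z, xstar - z⟫ = -⟪gf z, z - xstar⟫ := by
      rw [← inner_neg_right]; congr 1; abel
    have e3 : ⟪z, z - xstar⟫ - ⟪xstar, z - xstar⟫ = ‖z - xstar‖ ^ 2 := by
      rw [← inner_sub_left, real_inner_self_eq_norm_sq]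
    rw [e1, e2] at A
    have e3' : μ * (⟪z, z - xstar⟫ - ⟪xstar, z - xstar⟫) = μ * ‖z - xstar‖ ^ 2 := by
      rw [e3]
    nlinarith [A, B, e3']
  -- one-step inequality
  have hstep : ∀ k < N,
      (1 - α) * ‖xh k - x k‖ ^ 2 ≤ ‖x k - xstar‖ ^ 2 - ‖x (k + 1) - xstar‖ ^ 2 := by
    intro k hk
    exact qnpe_step μ α (η k) (gf (xh k)) xstar (x k) (xh k) (x (k + 1)) hμ (le_of_lt hα0) (le_of_lt hα1)
      (hη k hk) (hkey (xh k)) (happrox k hk) (hupdate k hk)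
  -- telescoping
  have htel : ∀ n, n ≤ N →
      ∑ k ∈ Finset.range n, (1 - α) * ‖xh k - x k‖ ^ 2
        ≤ ‖x 0 - xstar‖ ^ 2 - ‖x n - xstar‖ ^ 2 := by
    intro n
    induction n with
    | zero => simp
    | succ m ih =>
      intro hm
      have h1 := ih (by omega)
      have h2 := hstep m (by omega)
      rw [Finset.sum_range_succ]
      linarith
  have h1α : (0 : ℝ) < 1 - α := by linarith
  rw [le_div_iff₀ h1α]
  have := htel N le_rfl
  rw [← Finset.mul_sum] at this
  nlinarith [sq_nonneg ‖x N - xstar‖]
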